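/- Let f be a scoring function assigning probability vectors f(x_i) ∈ Δ_c to each of M instances, let s be a partial label with preimage {y ∈ Y^M : σ(y) = s}, and let y^{(1)},...,y^{(k)} be the k most probable label vectors in this preimage under P_{f(x)}(y) = Π_{i=1}^M f^{y_i}(x_i). Define the top-k partial ℓ¹ loss as 1 − WMC(∨_{i=1}^k y^{(i)}, f(x)) and the zero-one partial loss as 1{σ(argmax predictions of f) ≠ s}. Then the zero-one partial loss is at most (k+1) times the top-k partial ℓ¹ loss, which in turn is at most (k+1) times the top-k semantic loss −log WMC(∨_{i=1}^k y^{(i)}, f(x)). -/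

import Mathlib

open Finset

lemma pi_sum_prod {α : Type*} [Fintype α] [DecidableEq α] {β : α → Type*}
    [∀ a, Fintype (β a)] [∀ a, DecidableEq (β a)] (F : ∀ a, β a → ℝ) :
    ∑ g : ∀ a, β a, ∏ a, F a (g a) = ∏ a, ∑ b, F a b := by
  rw [Finset.prod_univ_sum (fun _ => univ) F, Fintype.piFinset_univ]

lemma marg {Y : Type*} [Fintype Y] [DecidableEq Y] {M : ℕ}
    (p : Fin M → Y → ℝ) (v : Fin M → Y) :
    ∑ I : Fin M → Y → Bool,
      (if (∀ j, I j (v j) = true) then ∏ j, ∏ y, (if I j y then p j y else 1 - p j y) else 0)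
    = ∏ j, p j (v j) := by
  have step1 : ∀ I : Fin M → Y → Bool,
      (if (∀ j, I j (v j) = true) then ∏ j, ∏ y, (if I j y then p j y else 1 - p j y) else 0)
      = ∏ j, (if I j (v j) = true then ∏ y, (if I j y then p j y else 1 - p j y) else 0) := by
    intro I
    by_cases h : ∀ j, I j (v j) = true
    · rw [if_pos h]
      exact Finset.prod_congr rfl fun j _ => (if_pos (h j)).symm
    · push_neg at h; obtain ⟨j0, hj0⟩ := h
      rw [if_neg (by intro h'; exact hj0 (h' j0)), eq_comm]
      exact Finset.prod_eq_zero (mem_univ j0) (by simp [hj0])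
  simp_rw [step1]
  rw [pi_sum_prod (fun j (g : Y → Bool) => if g (v j) = true then ∏ y, (if g y then p j y else 1 - p j y) else 0)]
  refine Finset.prod_congr rfl fun j _ => ?_
  have step2 : ∀ g : Y → Bool,
      (if g (v j) = true then ∏ y, (if g y then p j y else 1 - p j y) else 0)
      = ∏ y, (if y = v j then (if g y then p j y else 0) else (if g y then p j y else 1 - p j y)) := by
    intro g
    by_cases h : g (v j) = true
    · rw [if_pos h]
      refine Finset.prod_congr rfl fun y _ => ?_
      by_cases hy : y = v j
      · subst hy; simp [h]
      · simp [hy]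
    · rw [if_neg h, eq_comm]
      refine Finset.prod_eq_zero (mem_univ (v j)) ?_
      simp only [if_pos rfl]
      simp [Bool.not_eq_true] at h
      simp [h]
  simp_rw [step2]
  rw [pi_sum_prod (fun y (b : Bool) => if y = v j then (if b then p j y else 0) else (if b then p j y else 1 - p j y))]
  have key : ∀ y : Y, (∑ b : Bool, if y = v j then (if b then p j y else 0) else (if b then p j y else 1 - p j y)) = if y = v j then p j y else 1 := by
    intro y
    rw [Fintype.sum_bool]
    by_cases hy : y = v j <;> simp [hy] <;> ring
  simp_rw [key]
  simp [Finset.prod_ite_eq']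

theorem stmt7 {Y S : Type*} [Fintype Y] [DecidableEq Y] [DecidableEq S]
    (M k : ℕ) (hk : 1 ≤ k)
    (σ : (Fin M → Y) → S) (s : S)
    (p : Fin M → Y → ℝ)
    (hp0 : ∀ j y, 0 < p j y) (hp1 : ∀ j, ∑ y, p j y = 1)
    (yf : Fin M → Y) (hyf : ∀ j y, p j y ≤ p j (yf j))
    (yk : Fin k → Fin M → Y) (hinj : Function.Injective yk)
    (hpre : ∀ i, σ (yk i) = s)
    (htop : ∀ v : Fin M → Y, σ v = s → (∀ i, v ≠ yk i) →
      ∀ i, ∏ j, p j (v j) ≤ ∏ j, p j (yk i j)) :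
    ((if σ yf ≠ s then (1 : ℝ) else 0)
      ≤ (k + 1) *
        (1 - ∑ I : Fin M → Y → Bool,
          if (∃ i : Fin k, ∀ j, I j (yk i j) = true) then
            ∏ j, ∏ y, (if I j y then p j y else 1 - p j y) else 0))
    ∧ ((k + 1) *
        (1 - ∑ I : Fin M → Y → Bool,
          if (∃ i : Fin k, ∀ j, I j (yk i j) = true) then
            ∏ j, ∏ y, (if I j y then p j y else 1 - p j y) else 0)
      ≤ (k + 1) *
        (-Real.log (∑ I : Fin M → Y → Bool,
          if (∃ i : Fin k, ∀ j, I j (yk i j) = true) then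
            ∏ j, ∏ y, (if I j y then p j y else 1 - p j y) else 0))) := by
  set W := ∑ I : Fin M → Y → Bool,
      (if (∃ i : Fin k, ∀ j, I j (yk i j) = true) then
        ∏ j, ∏ y, (if I j y then p j y else 1 - p j y) else 0) with hWdef
  have hp1' : ∀ j y, p j y ≤ 1 := by
    intro j y
    calc p j y ≤ ∑ y, p j y :=
          Finset.single_le_sum (fun y _ => (hp0 j y).le) (mem_univ y)
      _ = 1 := hp1 j
  have hw0 : ∀ I : Fin M → Y → Bool,
      (0:ℝ) ≤ ∏ j, ∏ y, (if I j y then p j y else 1 - p j y) := by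
    intro I
    refine Finset.prod_nonneg fun j _ => Finset.prod_nonneg fun y _ => ?_
    by_cases h : I j y <;> simp [h]
    exacts [(hp0 j y).le, hp1' j y]
  have ht0 : ∀ I : Fin M → Y → Bool,
      (0:ℝ) ≤ (if (∃ i : Fin k, ∀ j, I j (yk i j) = true) then
        ∏ j, ∏ y, (if I j y then p j y else 1 - p j y) else 0) := by
    intro I; split
    · exact hw0 I
    · exact le_refl 0
  have hW1 : W ≤ 1 := by
    have h1 : W ≤ ∑ I : Fin M → Y → Bool,
        ∏ j, ∏ y, (if I j y then p j y else 1 - p j y) := by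
      refine Finset.sum_le_sum fun I _ => ?_
      split
      · exact le_refl _
      · exact hw0 I
    have h2 : ∑ I : Fin M → Y → Bool,
        ∏ j, ∏ y, (if I j y then p j y else 1 - p j y) = 1 := by
      rw [pi_sum_prod (fun j (g : Y → Bool) => ∏ y, (if g y then p j y else 1 - p j y))]
      refine Finset.prod_eq_one fun j _ => ?_
      rw [pi_sum_prod (fun y (b : Bool) => if b then p j y else 1 - p j y)]
      refine Finset.prod_eq_one fun y _ => ?_
      rw [Fintype.sum_bool]; simp
    linarith
  have hWpos : 0 < W := by
    have hcond : ∃ i : Fin k, ∀ j, (fun (_ : Fin M) (_ : Y) => true) j (yk i j) = true :=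
      ⟨⟨0, hk⟩, fun j => rfl⟩
    have hterm : (0:ℝ) < (if (∃ i : Fin k, ∀ j, (fun (_ : Fin M) (_ : Y) => true) j (yk i j) = true) then
        ∏ j, ∏ y, (if (fun (_ : Fin M) (_ : Y) => true) j y then p j y else 1 - p j y) else 0) := by
      rw [if_pos hcond]
      exact Finset.prod_pos fun j _ => Finset.prod_pos fun y _ => by simpa using hp0 j y
    exact lt_of_lt_of_le hterm
      (Finset.single_le_sum (fun I _ => ht0 I) (mem_univ (fun _ _ => true)))
  have hub : W ≤ ∑ i : Fin k, ∏ j, p j (yk i j) := by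
    calc W ≤ ∑ I : Fin M → Y → Bool, ∑ i : Fin k,
          (if (∀ j, I j (yk i j) = true) then
            ∏ j, ∏ y, (if I j y then p j y else 1 - p j y) else 0) := by
          refine Finset.sum_le_sum fun I _ => ?_
          by_cases h : ∃ i : Fin k, ∀ j, I j (yk i j) = true
          · rw [if_pos h]
            obtain ⟨i0, hi0⟩ := h
            have := Finset.single_le_sum
              (f := fun i : Fin k => if (∀ j, I j (yk i j) = true) then
                ∏ j, ∏ y, (if I j y then p j y else 1 - p j y) else 0)
              (fun i _ => by split; exacts [hw0 I, le_refl 0]) (mem_univ i0)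
            simpa only [if_pos hi0] using this
          · rw [if_neg h]
            exact Finset.sum_nonneg fun i _ => by split; exacts [hw0 I, le_refl 0]
      _ = ∑ i : Fin k, ∑ I : Fin M → Y → Bool,
          (if (∀ j, I j (yk i j) = true) then
            ∏ j, ∏ y, (if I j y then p j y else 1 - p j y) else 0) := Finset.sum_comm
      _ = ∑ i : Fin k, ∏ j, p j (yk i j) :=
          Finset.sum_congr rfl fun i _ => marg p (yk i)
  constructor
  · by_cases hσ : σ yf = s
    · rw [if_neg (by simpa using hσ)]
      have : (0:ℝ) ≤ (k:ℝ) + 1 := by positivity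
      nlinarith
    · rw [if_pos hσ]
      have hne : ∀ i, yf ≠ yk i := fun i h => hσ (h ▸ hpre i)
      have hPle : ∀ i : Fin k, ∏ j, p j (yk i j) ≤ ∏ j, p j (yf j) := fun i =>
        Finset.prod_le_prod (fun j _ => (hp0 j _).le) (fun j _ => hyf j (yk i j))
      have hS_le : ∑ i : Fin k, ∏ j, p j (yk i j) ≤ (k:ℝ) * ∏ j, p j (yf j) := by
        calc ∑ i : Fin k, ∏ j, p j (yk i j) ≤ ∑ _i : Fin k, ∏ j, p j (yf j) :=
              Finset.sum_le_sum fun i _ => hPle i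
          _ = (k:ℝ) * ∏ j, p j (yf j) := by
              rw [Finset.sum_const, Finset.card_univ, Fintype.card_fin, nsmul_eq_mul]
      have htotv : ∑ v : Fin M → Y, ∏ j, p j (v j) = 1 := by
        rw [pi_sum_prod p]
        simp [hp1]
      have hnotmem : yf ∉ Finset.image yk Finset.univ := by
        simp only [Finset.mem_image, Finset.mem_univ, true_and]
        rintro ⟨i, hi⟩
        exact hne i hi.symm
      have hsum1 : (∏ j, p j (yf j)) + ∑ i : Fin k, ∏ j, p j (yk i j) ≤ 1 := by
        have hsub : ∑ v ∈ insert yf (Finset.image yk Finset.univ), ∏ j, p j (v j)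
            ≤ ∑ v : Fin M → Y, ∏ j, p j (v j) :=
          Finset.sum_le_sum_of_subset_of_nonneg (Finset.subset_univ _)
            (fun v _ _ => Finset.prod_nonneg fun j _ => (hp0 j _).le)
        rw [Finset.sum_insert hnotmem,
          Finset.sum_image (fun i _ i' _ h => hinj h), htotv] at hsub
        exact hsub
      have hk' : (1:ℝ) ≤ (k:ℝ) := by exact_mod_cast hk
      have hknn : (0:ℝ) ≤ (k:ℝ) := by positivity
      have h1 : (k:ℝ) * (∏ j, p j (yf j))
          ≤ (k:ℝ) * (1 - ∑ i : Fin k, ∏ j, p j (yk i j)) :=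
        mul_le_mul_of_nonneg_left (by linarith) hknn
      have h2 : ((k:ℝ) + 1) * W ≤ ((k:ℝ) + 1) * ∑ i : Fin k, ∏ j, p j (yk i j) :=
        mul_le_mul_of_nonneg_left hub (by positivity)
      nlinarith
  · have hlog : Real.log W ≤ W - 1 := Real.log_le_sub_one_of_pos hWpos
    exact mul_le_mul_of_nonneg_left (by linarith) (by positivity)
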